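/- arXiv:1404.5804 — 3 statements merged into one kernel-verified Lean document; each statement's English description precedes it below -/
import Mathlib

section
/- Let Q be the 2m×2m block-diagonal real matrix with diagonal blocks [[0,-1],[1,0]]. If U ∈ U(2m) satisfies U = -Q · conj(U) · Q, then det(U) = 1; that is, the fixed-point set of the involution μ(U) := -Q·conj(U)·Q on U(2m) is contained in SU(2m). -/
open Matrix ExteriorAlgebra

/-- The standard `2m × 2m` symplectic matrix `Q`, block-diagonal with `m`
diagonal blocks `[[0,-1],[1,0]]`. -/
def stdSymplectic (m : ℕ) : Matrix (Fin (2 * m)) (Fin (2 * m)) ℂ :=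
  Matrix.of fun i j =>
    if (j : ℕ) = (i : ℕ) + 1 ∧ Even (i : ℕ) then -1
    else if (i : ℕ) = (j : ℕ) + 1 ∧ Even (j : ℕ) then 1
    else 0

/-- ℕ-indexed version of the entries of `stdSymplectic`. -/
def Qn : ℕ → ℕ → ℂ := fun i j =>
  if j = i + 1 ∧ Even i then -1
  else if i = j + 1 ∧ Even j then 1
  else 0

lemma stdSymplectic_apply (m : ℕ) (i j : Fin (2*m)) :
    stdSymplectic m i j = Qn i j := rfl

lemma sum_range_two_mul {M : Type*} [AddCommMonoid M] (f : ℕ → M) (m : ℕ) :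
    ∑ i ∈ Finset.range (2*m), f i = ∑ k ∈ Finset.range m, (f (2*k) + f (2*k+1)) := by
  induction m with
  | zero => simp
  | succ n ih =>
    rw [Nat.mul_succ, show 2*n+2 = (2*n+1)+1 from rfl, Finset.sum_range_succ,
      Finset.sum_range_succ, ih, Finset.sum_range_succ, add_assoc]

lemma stdSymplectic_transpose (m : ℕ) :
    (stdSymplectic m)ᵀ = -(stdSymplectic m) := by
  ext i j
  simp only [Matrix.transpose_apply, Matrix.neg_apply, stdSymplectic_apply, Qn, Nat.even_iff]
  split_ifs <;> first | (exfalso; omega) | norm_num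

lemma stdSymplectic_sq (m : ℕ) :
    stdSymplectic m * stdSymplectic m = -1 := by
  ext i j
  rw [Matrix.mul_apply]
  have h0 : ∑ k : Fin (2*m), stdSymplectic m i k * stdSymplectic m k j
      = ∑ k ∈ Finset.range (2*m), Qn i k * Qn k j :=
    Fin.sum_univ_eq_sum_range (fun k => Qn i k * Qn k j) (2*m)
  rw [h0, sum_range_two_mul]
  simp only [Qn, Nat.even_iff]
  by_cases hij : i = j
  · subst hij
    have hmem : (i:ℕ)/2 ∈ Finset.range m := by
      have := i.isLt; exact Finset.mem_range.mpr (by omega)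
    rw [Finset.sum_eq_single_of_mem ((i:ℕ)/2) hmem]
    · have hi := i.isLt
      rw [Matrix.neg_apply, Matrix.one_apply, if_pos rfl]
      split_ifs <;> first | (exfalso; omega) | norm_num
    · intro t _ ht
      split_ifs <;> first | (exfalso; omega) | norm_num
  · have hij' : (i:ℕ) ≠ (j:ℕ) := fun h => hij (Fin.ext h)
    rw [Finset.sum_eq_zero, Matrix.neg_apply, Matrix.one_apply, if_neg hij, neg_zero]
    intro t _
    split_ifs <;> first | (exfalso; omega) | norm_num


lemma list_pair_prod {A : Type*} [Monoid A] (g : ℕ → A) (m : ℕ) :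
    ((List.range m).map (fun k => g (2*k) * g (2*k+1))).prod
      = ((List.range (2*m)).map g).prod := by
  induction m with
  | zero => simp
  | succ n ih =>
    rw [List.range_succ, Nat.mul_succ, show 2*n+2 = (2*n+1)+1 from rfl,
      List.range_succ, List.range_succ]
    simp only [List.map_append, List.prod_append, List.map_cons, List.map_nil,
      List.prod_cons, List.prod_nil, ih]
    simp [mul_assoc]

lemma pow_ge_two_eq_zero {A : Type*} [Ring A] {w : A} (hw : w * w = 0) {j : ℕ}
    (hj : 2 ≤ j) : w ^ j = 0 := by
  obtain ⟨a, rfl⟩ : ∃ a, j = a + 2 := ⟨j - 2, by omega⟩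
  rw [pow_add, pow_two, hw, mul_zero]

lemma sum_sq_zero_pow {A : Type*} [Ring A] (w : ℕ → A)
    (hc : ∀ i j, Commute (w i) (w j)) (h2 : ∀ i, w i * w i = 0) (m : ℕ) :
    ((∑ i ∈ Finset.range m, w i) ^ m
        = m.factorial • ((List.range m).map w).prod)
      ∧ (∑ i ∈ Finset.range m, w i) ^ (m+1) = 0 := by
  induction m with
  | zero => simp
  | succ n ih =>
    obtain ⟨ih1, ih2⟩ := ih
    have hcom : Commute (∑ i ∈ Finset.range n, w i) (w n) :=
      Commute.sum_left _ _ _ (fun i _ => hc i n)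
    have hexp : ∀ N : ℕ, (∑ i ∈ Finset.range (n+1), w i) ^ N
        = ∑ k ∈ Finset.range (N+1),
            (∑ i ∈ Finset.range n, w i) ^ k * w n ^ (N - k) * (N.choose k) := by
      intro N
      rw [Finset.sum_range_succ]
      exact hcom.add_pow N
    constructor
    · rw [hexp (n+1), Finset.sum_eq_single_of_mem n (Finset.mem_range.mpr (by omega))]
      · rw [ih1, Nat.add_sub_cancel_left, pow_one, Nat.choose_succ_self_right]
        rw [List.range_succ, List.map_append, List.prod_append]
        simp only [List.map_cons, List.map_nil, List.prod_cons, List.prod_nil, mul_one]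
        rw [smul_mul_assoc, ← nsmul_eq_mul', smul_smul]
        congr 1
      · intro k hk hkn
        rcases lt_or_gt_of_ne hkn with h | h
        · rw [pow_ge_two_eq_zero (h2 n) (by omega), mul_zero, zero_mul]
        · have hk' : k = n + 1 := by simp at hk; omega
          subst hk'
          rw [ih2, zero_mul, zero_mul]
    · rw [hexp (n+2), Finset.sum_eq_zero]
      intro k hk
      simp only [Finset.mem_range] at hk
      rcases lt_trichotomy k (n+1) with h | h | h
      · rw [pow_ge_two_eq_zero (h2 n) (by omega), mul_zero, zero_mul]
      · subst h; rw [ih2, zero_mul, zero_mul]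
      · have : k = n + 2 := by omega
        subst this
        rw [show n+2 = (n+1)+1 from rfl, pow_succ, ih2, zero_mul, zero_mul, zero_mul]


variable {V : Type*} [AddCommGroup V] [Module ℂ V]

lemma ii_swap (x y : V) : ι ℂ x * ι ℂ y = -(ι ℂ y * ι ℂ x) :=
  eq_neg_of_add_eq_zero_left (ι_add_mul_swap x y)

lemma pair_commute (a b c d : V) :
    Commute (ι ℂ a * ι ℂ b) (ι ℂ c * ι ℂ d) := by
  unfold Commute SemiconjBy
  calc (ι ℂ a * ι ℂ b) * (ι ℂ c * ι ℂ d)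
      = ι ℂ a * (ι ℂ b * ι ℂ c) * ι ℂ d := by noncomm_ring
    _ = -(ι ℂ a * (ι ℂ c * ι ℂ b) * ι ℂ d) := by rw [ii_swap b c]; noncomm_ring
    _ = -(-((ι ℂ c * ι ℂ a) * (ι ℂ b * ι ℂ d))) := by rw [ii_swap c a]; noncomm_ring
    _ = ι ℂ c * (ι ℂ a * (ι ℂ b * ι ℂ d)) := by noncomm_ring
    _ = ι ℂ c * (ι ℂ a * -(ι ℂ d * ι ℂ b)) := by rw [ii_swap b d]
    _ = -(ι ℂ c * ((ι ℂ a * ι ℂ d) * ι ℂ b)) := by noncomm_ring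
    _ = -(ι ℂ c * (-(ι ℂ d * ι ℂ a) * ι ℂ b)) := by rw [ii_swap a d]
    _ = (ι ℂ c * ι ℂ d) * (ι ℂ a * ι ℂ b) := by noncomm_ring

lemma pair_sq (a b : V) : (ι ℂ a * ι ℂ b) * (ι ℂ a * ι ℂ b) = 0 := by
  calc (ι ℂ a * ι ℂ b) * (ι ℂ a * ι ℂ b)
      = ι ℂ a * (ι ℂ b * ι ℂ a) * ι ℂ b := by noncomm_ring
    _ = -(ι ℂ a * ι ℂ a * (ι ℂ b * ι ℂ b)) := by rw [ii_swap b a]; noncomm_ring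
    _ = 0 := by rw [ι_sq_zero]; simp

lemma pair_prod_eq_iMulti (v : ℕ → V) (m : ℕ) :
    ((List.range m).map (fun k => ι ℂ (v (2*k)) * ι ℂ (v (2*k+1)))).prod
      = ιMulti ℂ (2*m) (fun i : Fin (2*m) => v i) := by
  have h1 : ((List.range m).map (fun k => ι ℂ (v (2*k)) * ι ℂ (v (2*k+1)))).prod
      = ((List.range (2*m)).map (fun i => ι ℂ (v i))).prod := by
    have := list_pair_prod (fun i => ι ℂ (v i)) m
    exact this
  rw [h1, ιMulti_apply]
  congr 1
  rw [List.ofFn_eq_map]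
  exact List.ext_getElem (by simp) (by simp)

lemma ii_expand {n : ℕ} (x y : Fin n → ℂ) :
    ι ℂ x * ι ℂ y
      = ∑ i : Fin n, ∑ j : Fin n, (x i * y j) •
          (ι ℂ (Pi.basisFun ℂ (Fin n) i) * ι ℂ (Pi.basisFun ℂ (Fin n) j)) := by
  have hx : x = ∑ i : Fin n, x i • (Pi.basisFun ℂ (Fin n) i) := by
    ext t
    simp [Pi.basisFun_apply]
    rw [Finset.sum_eq_single t]
    · simp
    · intro b _ hb; simp [Pi.single_apply, hb]
    · simp
  have hy : y = ∑ j : Fin n, y j • (Pi.basisFun ℂ (Fin n) j) := by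
    ext t
    simp [Pi.basisFun_apply]
    rw [Finset.sum_eq_single t]
    · simp
    · intro b _ hb; simp [Pi.single_apply, hb]
    · simp
  conv_lhs => rw [hx, hy]
  rw [map_sum, map_sum, Finset.sum_mul_sum]
  refine Finset.sum_congr rfl (fun i _ => Finset.sum_congr rfl (fun j _ => ?_))
  rw [_root_.map_smul, _root_.map_smul, smul_mul_smul_comm]


lemma sum_swap4 {M : Type*} [AddCommMonoid M] {α : Type*} [Fintype α]
    (f : α → α → α → α → M) :
    ∑ a, ∑ c, ∑ i, ∑ j, f a c i j = ∑ i, ∑ j, ∑ a, ∑ c, f a c i j :=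
  calc ∑ a, ∑ c, ∑ i, ∑ j, f a c i j
      = ∑ a, ∑ i, ∑ c, ∑ j, f a c i j :=
        Finset.sum_congr rfl fun a _ => Finset.sum_comm
    _ = ∑ i, ∑ a, ∑ c, ∑ j, f a c i j := Finset.sum_comm
    _ = ∑ i, ∑ a, ∑ j, ∑ c, f a c i j :=
        Finset.sum_congr rfl fun i _ =>
          Finset.sum_congr rfl fun a _ => Finset.sum_comm
    _ = ∑ i, ∑ j, ∑ a, ∑ c, f a c i j :=
        Finset.sum_congr rfl fun i _ => Finset.sum_comm



set_option maxHeartbeats 1000000 in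
/-- If `U ∈ U(2m)` satisfies `U = -Q · conj(U) · Q`, then `det U = 1`. -/
theorem fixed_of_mu_mem_SU (m : ℕ) (U : Matrix (Fin (2 * m)) (Fin (2 * m)) ℂ)
    (hU : U ∈ Matrix.unitaryGroup (Fin (2 * m)) ℂ)
    (hfix : U = -(stdSymplectic m * U.map (starRingEnd ℂ) * stdSymplectic m)) :
    U.det = 1 := by
  have hQn1 : ∀ k t : ℕ, Qn (2*k) (2*t) = 0 := by
    intro k t
    simp only [Qn, Nat.even_iff]
    split_ifs <;> first | (exfalso; omega) | norm_num
  have hQn2 : ∀ k t : ℕ, Qn (2*k) (2*t+1) = if t = k then -1 else 0 := by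
    intro k t
    simp only [Qn, Nat.even_iff]
    split_ifs <;> first | (exfalso; omega) | norm_num
  have hQn3 : ∀ k t : ℕ, Qn (2*k+1) (2*t) = if t = k then 1 else 0 := by
    intro k t
    simp only [Qn, Nat.even_iff]
    split_ifs <;> first | (exfalso; omega) | norm_num
  have hQn4 : ∀ k t : ℕ, Qn (2*k+1) (2*t+1) = 0 := by
    intro k t
    simp only [Qn, Nat.even_iff]
    split_ifs <;> first | (exfalso; omega) | norm_num
  have hQc : (stdSymplectic m).map (starRingEnd ℂ) = stdSymplectic m := by
    ext i j
    simp only [Matrix.map_apply, stdSymplectic_apply, Qn]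
    split_ifs <;> simp
  have hQmat : U * stdSymplectic m * Uᵀ = stdSymplectic m := by
    set Q := stdSymplectic m with hQdef
    have hconj : U.map (starRingEnd ℂ) = -(Q * U * Q) := by
      have h := congrArg (fun M : Matrix (Fin (2*m)) (Fin (2*m)) ℂ =>
        M.map (starRingEnd ℂ)) hfix
      have hUU : (U.map (starRingEnd ℂ)).map (starRingEnd ℂ) = U := by
        ext i j; simp [Matrix.map_apply]
      have hneg : ∀ (A : Matrix (Fin (2*m)) (Fin (2*m)) ℂ),
          (-A).map (starRingEnd ℂ) = -(A.map (starRingEnd ℂ)) := by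
        intro A; ext i j; simp [Matrix.map_apply]
      rw [hneg, Matrix.map_mul, Matrix.map_mul, hQc, hUU] at h
      exact h
    have hstar : star U = -(Q * Uᵀ * Q) := by
      rw [Matrix.star_eq_conjTranspose]
      have h1 : Uᴴ = (U.map (starRingEnd ℂ))ᵀ := by
        ext i j; simp [Matrix.conjTranspose_apply, Matrix.map_apply]
      rw [h1, hconj]
      rw [Matrix.transpose_neg, Matrix.transpose_mul, Matrix.transpose_mul,
        stdSymplectic_transpose]
      simp only [← hQdef, Matrix.neg_mul, Matrix.mul_neg, neg_neg]
      rw [Matrix.mul_assoc]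
    have h1 : U * star U = 1 := (Matrix.mem_unitaryGroup_iff).mp hU
    rw [hstar] at h1
    have h2 : U * Q * Uᵀ * Q = -1 := by
      rw [← neg_eq_iff_eq_neg]
      rw [← h1]
      simp only [Matrix.mul_neg, Matrix.mul_assoc, neg_neg]
    have h3 := congrArg (fun M => M * Q) h2
    simp only [Matrix.mul_assoc] at h3
    rw [stdSymplectic_sq] at h3
    simp only [Matrix.mul_neg, Matrix.mul_one, Matrix.neg_mul, neg_neg,
      Matrix.one_mul] at h3
    rw [← Matrix.mul_assoc] at h3
    exact neg_injective h3
  set b := Pi.basisFun ℂ (Fin (2*m)) with hb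
  set u : (Fin (2*m) → ℂ) →ₗ[ℂ] (Fin (2*m) → ℂ) := Matrix.toLin' U with hu
  set εn : ℕ → (Fin (2*m) → ℂ) := fun i => if h : i < 2*m then b ⟨i, h⟩ else 0 with hεn
  have hbε : ∀ a : Fin (2*m), b a = εn (a : ℕ) := by
    intro a
    rw [hεn]
    simp only [a.isLt, dif_pos, Fin.eta]
  set w : Fin (2*m) → Fin (2*m) → ExteriorAlgebra ℂ (Fin (2*m) → ℂ) :=
    fun a c => ι ℂ (b a) * ι ℂ (b c) with hw
  set ω : ExteriorAlgebra ℂ (Fin (2*m) → ℂ) :=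
    ∑ a : Fin (2*m), ∑ c : Fin (2*m), stdSymplectic m a c • w a c with hω
  set Wp : ℕ → ExteriorAlgebra ℂ (Fin (2*m) → ℂ) :=
    fun k => ι ℂ (εn (2*k)) * ι ℂ (εn (2*k+1)) with hWp
  set ωP : ExteriorAlgebra ℂ (Fin (2*m) → ℂ) := ∑ k ∈ Finset.range m, Wp k with hωP
  -- u sends basis vectors to columns
  have hub : ∀ a : Fin (2*m), u (b a) = fun i => U i a := by
    intro a
    rw [hu, hb]
    ext i
    simp [Matrix.toLin'_apply, Pi.basisFun_apply, Matrix.mulVec_single]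
  -- Step A : map u ω = ω
  have stepA : map u ω = ω := by
    have h1 : map u ω = ∑ a : Fin (2*m), ∑ c : Fin (2*m),
        stdSymplectic m a c • (ι ℂ (u (b a)) * ι ℂ (u (b c))) := by
      rw [hω, map_sum]
      refine Finset.sum_congr rfl fun a _ => ?_
      rw [map_sum]
      refine Finset.sum_congr rfl fun c _ => ?_
      rw [_root_.map_smul, _root_.map_mul, map_apply_ι, map_apply_ι]
    rw [h1]
    have h2 : ∀ a c : Fin (2*m),
        stdSymplectic m a c • (ι ℂ (u (b a)) * ι ℂ (u (b c)))
          = ∑ i : Fin (2*m), ∑ j : Fin (2*m),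
              (U i a * stdSymplectic m a c * U j c) • w i j := by
      intro a c
      rw [hub a, hub c, ii_expand]
      rw [Finset.smul_sum]
      refine Finset.sum_congr rfl fun i _ => ?_
      rw [Finset.smul_sum]
      refine Finset.sum_congr rfl fun j _ => ?_
      rw [smul_smul, show w i j = ι ℂ (b i) * ι ℂ (b j) from rfl]
      congr 1
      ring
    calc ∑ a : Fin (2*m), ∑ c : Fin (2*m),
          stdSymplectic m a c • (ι ℂ (u (b a)) * ι ℂ (u (b c)))
        = ∑ a : Fin (2*m), ∑ c : Fin (2*m), ∑ i : Fin (2*m), ∑ j : Fin (2*m),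
            (U i a * stdSymplectic m a c * U j c) • w i j :=
          Finset.sum_congr rfl fun a _ => Finset.sum_congr rfl fun c _ => h2 a c
      _ = ∑ i : Fin (2*m), ∑ j : Fin (2*m), ∑ a : Fin (2*m), ∑ c : Fin (2*m),
            (U i a * stdSymplectic m a c * U j c) • w i j := sum_swap4 _
      _ = ∑ i : Fin (2*m), ∑ j : Fin (2*m), ∑ c : Fin (2*m), ∑ a : Fin (2*m),
            (U i a * stdSymplectic m a c * U j c) • w i j :=
          Finset.sum_congr rfl fun i _ => Finset.sum_congr rfl fun j _ => Finset.sum_comm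
      _ = ∑ i : Fin (2*m), ∑ j : Fin (2*m),
            (U * stdSymplectic m * Uᵀ) i j • w i j := by
          refine Finset.sum_congr rfl fun i _ => Finset.sum_congr rfl fun j _ => ?_
          rw [Matrix.mul_apply]
          rw [Finset.sum_smul]
          refine Finset.sum_congr rfl fun c _ => ?_
          rw [Matrix.mul_apply, Matrix.transpose_apply, Finset.sum_mul, Finset.sum_smul]
      _ = ω := by rw [hQmat, hω]
  -- Step B : ω = (-2) • ωP
  have stepB : ω = (-2 : ℂ) • ωP := by
    set G : ℕ → ℕ → ExteriorAlgebra ℂ (Fin (2*m) → ℂ) :=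
      fun a c => Qn a c • (ι ℂ (εn a) * ι ℂ (εn c)) with hG
    have h1 : ω = ∑ a ∈ Finset.range (2*m), ∑ c ∈ Finset.range (2*m), G a c := by
      rw [hω]
      have : ∀ a c : Fin (2*m), stdSymplectic m a c • w a c = G (a:ℕ) (c:ℕ) := by
        intro a c
        rw [stdSymplectic_apply]
        show Qn a c • (ι ℂ (b a) * ι ℂ (b c)) = Qn a c • (ι ℂ (εn a) * ι ℂ (εn c))
        rw [hbε a, hbε c]
      rw [Finset.sum_congr rfl fun a _ => Finset.sum_congr rfl fun c _ => this a c]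
      rw [← Fin.sum_univ_eq_sum_range (fun a => ∑ c ∈ Finset.range (2*m), G a c) (2*m)]
      exact Finset.sum_congr rfl fun a _ =>
        Fin.sum_univ_eq_sum_range (fun c => G (a:ℕ) c) (2*m)
    rw [h1, sum_range_two_mul (fun a => ∑ c ∈ Finset.range (2*m), G a c) m]
    have h2 : ∀ k ∈ Finset.range m,
        (∑ c ∈ Finset.range (2*m), G (2*k) c) + (∑ c ∈ Finset.range (2*m), G (2*k+1) c)
          = (-2 : ℂ) • Wp k := by
      intro k hk
      rw [sum_range_two_mul (fun c => G (2*k) c) m, sum_range_two_mul (fun c => G (2*k+1) c) m]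
      have gz1 : ∀ t, G (2*k) (2*t) = 0 := by
        intro t
        show Qn (2*k) (2*t) • _ = 0
        rw [hQn1, zero_smul]
      have gz4 : ∀ t, G (2*k+1) (2*t+1) = 0 := by
        intro t
        show Qn (2*k+1) (2*t+1) • _ = 0
        rw [hQn4, zero_smul]
      have g2 : ∀ t, G (2*k) (2*t+1)
          = (if t = k then (-1:ℂ) else 0) • (ι ℂ (εn (2*k)) * ι ℂ (εn (2*t+1))) := by
        intro t
        show Qn (2*k) (2*t+1) • _ = _
        rw [hQn2]
      have g3 : ∀ t, G (2*k+1) (2*t)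
          = (if t = k then (1:ℂ) else 0) • (ι ℂ (εn (2*k+1)) * ι ℂ (εn (2*t))) := by
        intro t
        show Qn (2*k+1) (2*t) • _ = _
        rw [hQn3]
      have e1 : ∑ t ∈ Finset.range m, (G (2*k) (2*t) + G (2*k) (2*t+1))
          = (-1 : ℂ) • Wp k := by
        rw [Finset.sum_eq_single_of_mem k hk]
        · rw [gz1, g2, if_pos rfl, zero_add, hWp]
        · intro t _ htk
          rw [gz1, g2, if_neg htk, zero_add, zero_smul]
      have e2 : ∑ t ∈ Finset.range m, (G (2*k+1) (2*t) + G (2*k+1) (2*t+1))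
          = -(Wp k) := by
        rw [Finset.sum_eq_single_of_mem k hk]
        · rw [gz4, g3, if_pos rfl, add_zero, one_smul, ii_swap, hWp]
        · intro t _ htk
          rw [gz4, g3, if_neg htk, add_zero, zero_smul]
      rw [e1, e2]
      rw [← neg_one_smul ℂ (Wp k), ← add_smul]
      norm_num
    rw [Finset.sum_congr rfl h2, ← Finset.smul_sum, hωP]
  -- Step C : ωP^m = m! • ιMulti b
  have hcomm : ∀ i j, Commute (Wp i) (Wp j) := fun i j => pair_commute _ _ _ _
  have hsq : ∀ i, Wp i * Wp i = 0 := fun i => pair_sq _ _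
  have stepC : ωP ^ m = (m.factorial : ℂ) • ιMulti ℂ (2*m) ⇑b := by
    rw [hωP, (sum_sq_zero_pow Wp hcomm hsq m).1]
    have : ((List.range m).map Wp).prod = ιMulti ℂ (2*m) (fun i : Fin (2*m) => εn i) := by
      rw [hWp]
      exact pair_prod_eq_iMulti εn m
    rw [this]
    have hfe : (fun i : Fin (2*m) => εn (i:ℕ)) = ⇑b := by
      funext i; rw [← hbε]
    rw [hfe, Nat.cast_smul_eq_nsmul]
  -- Step D : the determinant functional
  set F : ∀ i : ℕ, (Fin (2*m) → ℂ) [⋀^Fin i]→ₗ[ℂ] ℂ :=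
    Function.update (fun i => (0 : (Fin (2*m) → ℂ) [⋀^Fin i]→ₗ[ℂ] ℂ)) (2*m) b.det with hF
  set L : ExteriorAlgebra ℂ (Fin (2*m) → ℂ) →ₗ[ℂ] ℂ := liftAlternating F with hL
  have hLap : ∀ v : Fin (2*m) → (Fin (2*m) → ℂ), L (ιMulti ℂ (2*m) v) = b.det v := by
    intro v
    rw [hL, liftAlternating_apply_ιMulti, hF, Function.update_self]
  -- Step E : conclude
  have key : map u (ω ^ m) = ω ^ m := by rw [map_pow, stepA]
  have hωm : ω ^ m = ((-2:ℂ)^m * m.factorial) • ιMulti ℂ (2*m) ⇑b := by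
    rw [stepB, smul_pow, stepC, smul_smul]
  have hmap2 : map u (ω ^ m)
      = ((-2:ℂ)^m * m.factorial) • ιMulti ℂ (2*m) (⇑u ∘ ⇑b) := by
    rw [hωm, _root_.map_smul, map_apply_ιMulti]
  have heq : ((-2:ℂ)^m * m.factorial) • ιMulti ℂ (2*m) (⇑u ∘ ⇑b)
      = ((-2:ℂ)^m * m.factorial) • ιMulti ℂ (2*m) ⇑b := by
    rw [← hmap2, key, hωm]
  have heq2 := congrArg L heq
  rw [LinearMap.map_smul, LinearMap.map_smul, hLap, hLap, Module.Basis.det_comp, Module.Basis.det_self, mul_one] at heq2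
  have hc : ((-2:ℂ)^m * m.factorial) ≠ 0 := by
    apply mul_ne_zero
    · exact pow_ne_zero m (by norm_num)
    · exact_mod_cast Nat.factorial_ne_zero m
  have := mul_left_cancel₀ hc heq2
  rw [hu, LinearMap.det_toLin'] at this
  exact this
end

section
/- The map w : S³ → U(2) given by w(k₀,k₁,k₂,k₃) = [[k₁+ik₂, ik₃+k₀],[ik₃-k₀, k₁-ik₂]] is unitary for all (k₀,k₁,k₂,k₃) ∈ S³, satisfies w(k₀,-k₁,-k₂,-k₃) = -w(k₀,k₁,k₂,k₃)ᵀ, has det(w) ≡ 1, and at the two fixed points k± = (±1,0,0,0) of the involution τ(k₀,k₁,k₂,k₃) = (k₀,-k₁,-k₂,-k₃) the Pfaffian of the skew-symmetric matrix w(k±) equals ±1. -/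
open Matrix

/-- The map `w : S³ → U(2)`,
`w(k₀,k₁,k₂,k₃) = [[k₁+ik₂, ik₃+k₀],[ik₃-k₀, k₁-ik₂]]`. -/
noncomputable def wSphere (k₀ k₁ k₂ k₃ : ℝ) : Matrix (Fin 2) (Fin 2) ℂ :=
  !![(k₁ : ℂ) + Complex.I * (k₂ : ℂ), Complex.I * (k₃ : ℂ) + (k₀ : ℂ);
     Complex.I * (k₃ : ℂ) - (k₀ : ℂ), (k₁ : ℂ) - Complex.I * (k₂ : ℂ)]

/-- For `(k₀,k₁,k₂,k₃) ∈ S³`: `w(k)` is unitary, `w` satisfies the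
equivariance `w(k₀,-k₁,-k₂,-k₃) = -w(k₀,k₁,k₂,k₃)ᵀ`, `det (w k) = 1`; and at
the fixed points `(±1,0,0,0)` of the involution the Pfaffian of the
skew-symmetric matrix `w(k±)` (its `(0,1)` entry) equals `±1`. -/
theorem wSphere_properties :
    (∀ k₀ k₁ k₂ k₃ : ℝ, k₀ ^ 2 + k₁ ^ 2 + k₂ ^ 2 + k₃ ^ 2 = 1 →
      wSphere k₀ k₁ k₂ k₃ ∈ Matrix.unitaryGroup (Fin 2) ℂ ∧
      wSphere k₀ (-k₁) (-k₂) (-k₃) = -(wSphere k₀ k₁ k₂ k₃)ᵀ ∧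
      (wSphere k₀ k₁ k₂ k₃).det = 1) ∧
    (wSphere 1 0 0 0)ᵀ = -(wSphere 1 0 0 0) ∧
    (wSphere (-1) 0 0 0)ᵀ = -(wSphere (-1) 0 0 0) ∧
    (wSphere 1 0 0 0) 0 1 = 1 ∧
    (wSphere (-1) 0 0 0) 0 1 = -1 := by
  refine ⟨fun k₀ k₁ k₂ k₃ h => ?_, ?_, ?_, ?_, ?_⟩
  · have hc : (k₀ : ℂ) ^ 2 + (k₁ : ℂ) ^ 2 + (k₂ : ℂ) ^ 2 + (k₃ : ℂ) ^ 2 = 1 := by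
      exact_mod_cast congrArg (Complex.ofReal) h
    refine ⟨?_, ?_, ?_⟩
    · rw [Matrix.mem_unitaryGroup_iff]
      ext i j
      simp only [wSphere, Matrix.mul_apply, Matrix.star_apply, Fin.sum_univ_two]
      fin_cases i <;> fin_cases j <;>
        simp [Matrix.one_apply, Complex.ext_iff, Complex.add_re, Complex.add_im,
          Complex.mul_re, Complex.mul_im] <;>
      constructor <;> nlinarith [h]
    · ext i j
      fin_cases i <;> fin_cases j <;>
        simp [wSphere, Matrix.transpose_apply, Matrix.vecHead, Matrix.vecTail] <;> ring
    · simp only [wSphere, Matrix.det_fin_two_of]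
      linear_combination hc - ((k₂:ℂ)^2 + (k₃:ℂ)^2) * Complex.I_sq
  · ext i j; fin_cases i <;> fin_cases j <;> simp [wSphere]
  · ext i j; fin_cases i <;> fin_cases j <;> simp [wSphere]
  · simp [wSphere]
  · simp [wSphere]
end

section
/- The maps k₀, k₁, k₂ : [-π,π]² → ℝ defined by k₀ = (7 + cosθ₁ + cosθ₂ - 9cosθ₁cosθ₂)/D, k₁ = 4sinθ₁(1-cosθ₂)/D, k₂ = 4sinθ₂(1-cosθ₁)/D, where D = 9 - cosθ₁ - cosθ₂ - 7cosθ₁cosθ₂, satisfy: D > 0 for (θ₁,θ₂) ≠ (0,0); k₀² + k₁² + k₂² = 1 wherever defined; k₀(-θ₁,-θ₂) = k₀(θ₁,θ₂) and k_j(-θ₁,-θ₂) = -k_j(θ₁,θ₂) for j = 1,2; and (k₀,k₁,k₂) equals (+1,0,0) at (0,π), (π,0), and (-1,0,0) at (π,π). -/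
open Real

/-- The common denominator `D(θ₁,θ₂) = 9 - cosθ₁ - cosθ₂ - 7·cosθ₁·cosθ₂`. -/
noncomputable def Dden (θ₁ θ₂ : ℝ) : ℝ :=
  9 - Real.cos θ₁ - Real.cos θ₂ - 7 * Real.cos θ₁ * Real.cos θ₂

/-- `k₀ = (7 + cosθ₁ + cosθ₂ - 9·cosθ₁·cosθ₂)/D`. -/
noncomputable def kZero (θ₁ θ₂ : ℝ) : ℝ :=
  (7 + Real.cos θ₁ + Real.cos θ₂ - 9 * Real.cos θ₁ * Real.cos θ₂) / Dden θ₁ θ₂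

/-- `k₁ = 4·sinθ₁·(1-cosθ₂)/D`. -/
noncomputable def kOne (θ₁ θ₂ : ℝ) : ℝ :=
  4 * Real.sin θ₁ * (1 - Real.cos θ₂) / Dden θ₁ θ₂

/-- `k₂ = 4·sinθ₂·(1-cosθ₁)/D`. -/
noncomputable def kTwo (θ₁ θ₂ : ℝ) : ℝ :=
  4 * Real.sin θ₂ * (1 - Real.cos θ₁) / Dden θ₁ θ₂

/-- Properties of the equivariant map `𝕋² → S²`: the denominator `D` is
positive away from the origin; `(k₀,k₁,k₂)` lands on the unit sphere wherever
defined; the maps are equivariant under negation of the angles; and they take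
the values `(+1,0,0)` at `(0,π)` and `(π,0)`, and `(-1,0,0)` at `(π,π)`. -/
theorem torus_to_sphere_map_properties :
    (∀ θ₁ ∈ Set.Icc (-π) π, ∀ θ₂ ∈ Set.Icc (-π) π,
      ¬(θ₁ = 0 ∧ θ₂ = 0) → 0 < Dden θ₁ θ₂) ∧
    (∀ θ₁ θ₂ : ℝ, Dden θ₁ θ₂ ≠ 0 →
      kZero θ₁ θ₂ ^ 2 + kOne θ₁ θ₂ ^ 2 + kTwo θ₁ θ₂ ^ 2 = 1) ∧
    (∀ θ₁ θ₂ : ℝ,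
      kZero (-θ₁) (-θ₂) = kZero θ₁ θ₂ ∧
      kOne (-θ₁) (-θ₂) = -kOne θ₁ θ₂ ∧
      kTwo (-θ₁) (-θ₂) = -kTwo θ₁ θ₂) ∧
    (kZero 0 π = 1 ∧ kOne 0 π = 0 ∧ kTwo 0 π = 0) ∧
    (kZero π 0 = 1 ∧ kOne π 0 = 0 ∧ kTwo π 0 = 0) ∧
    (kZero π π = -1 ∧ kOne π π = 0 ∧ kTwo π π = 0) := by
  have hpi := Real.pi_pos
  refine ⟨?_, ?_, ?_, ?_, ?_, ?_⟩
  · intro θ₁ h₁ θ₂ h₂ hne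
    have c₁le := Real.cos_le_one θ₁
    have c₂le := Real.cos_le_one θ₂
    have c₁ge := Real.neg_one_le_cos θ₁
    have c₂ge := Real.neg_one_le_cos θ₂
    have key : θ₁ ≠ 0 ∨ θ₂ ≠ 0 := by tauto
    have hlt : Real.cos θ₁ < 1 ∨ Real.cos θ₂ < 1 := by
      rcases key with h | h
      · left
        rcases lt_or_eq_of_le c₁le with h' | h'
        · exact h'
        · exfalso; apply h
          have : -(2 * π) < θ₁ := by nlinarith [h₁.1]
          have : θ₁ < 2 * π := by nlinarith [h₁.2]
          exact (Real.cos_eq_one_iff_of_lt_of_lt ‹-(2*π) < θ₁› ‹θ₁ < 2*π›).mp h'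
      · right
        rcases lt_or_eq_of_le c₂le with h' | h'
        · exact h'
        · exfalso; apply h
          have : -(2 * π) < θ₂ := by nlinarith [h₂.1]
          have : θ₂ < 2 * π := by nlinarith [h₂.2]
          exact (Real.cos_eq_one_iff_of_lt_of_lt ‹-(2*π) < θ₂› ‹θ₂ < 2*π›).mp h'
    unfold Dden
    rcases hlt with h | h <;> nlinarith
  · intro θ₁ θ₂ hD
    have s₁ := Real.sin_sq_add_cos_sq θ₁
    have s₂ := Real.sin_sq_add_cos_sq θ₂
    unfold kZero kOne kTwo
    rw [div_pow, div_pow, div_pow, ← add_div, ← add_div,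
      div_eq_one_iff_eq (pow_ne_zero 2 hD)]
    unfold Dden at *
    linear_combination 16 * (1 - Real.cos θ₂)^2 * s₁ + 16 * (1 - Real.cos θ₁)^2 * s₂
  · intro θ₁ θ₂
    unfold kZero kOne kTwo Dden
    simp [Real.cos_neg, Real.sin_neg, neg_div]
  · unfold kZero kOne kTwo Dden
    norm_num
  · unfold kZero kOne kTwo Dden
    norm_num
  · unfold kZero kOne kTwo Dden
    norm_num
end
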